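/- Let Γ be a simple graph on a vertex set B with right-angled Coxeter group W = W_Γ, and let Γ₁, Γ₂ ⊆ B. Let w ∈ W_{Γ₁}, and let u, u' ∈ W be such that neither u nor u' starts with a letter from Γ₁ (i.e. no element of Γ₁ is a left descent of u or of u') and neither u nor u' ends with a letter from Γ₂ (i.e. no element of Γ₂ is a right descent of u or of u'). Let l be a reduced word for u, i.e. a list of elements of B whose associated product of generators equals u and whose length equals ℓ(u). Then the following are equivalent: (1) u⁻¹ · w · u' ∈ W_{Γ₂}; (2) u = u' and w ∈ W_{Γ₁ ∩ Γ₂ ∩ Link(l)}, where Link(l) = {t ∈ B : t is adjacent in Γ to every letter occurring in l}. -/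

import Mathlib

/-- The right-angled Coxeter matrix of a simple graph `Γ`: `M i i = 1`, `M i j = 2`
when `i, j` are adjacent in `Γ`, and `M i j = 0` (representing `∞`) otherwise. -/
def racMatrix {V : Type*} [DecidableEq V] (Γ : SimpleGraph V) [DecidableRel Γ.Adj] :
    CoxeterMatrix V where
  M := Matrix.of fun i j => if i = j then 1 else if Γ.Adj i j then 2 else 0
  isSymm := by
    ext i j
    simp only [Matrix.transpose_apply, Matrix.of_apply]
    by_cases h : i = j
    · subst h; simp
    · rw [if_neg h, if_neg (Ne.symm h)]
      simp only [Γ.adj_comm i j]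
  diagonal i := by simp
  off_diagonal i j h := by
    simp only [Matrix.of_apply, if_neg h]
    split <;> omega

/-- The standard parabolic subgroup `W_Λ` of the right-angled Coxeter group of `Γ`,
generated by the simple reflections indexed by `Λ`. -/
def racParabolic {V : Type*} [DecidableEq V] (Γ : SimpleGraph V) [DecidableRel Γ.Adj]
    (Λ : Set V) : Subgroup (racMatrix Γ).Group :=
  Subgroup.closure ((racMatrix Γ).simple '' Λ)

namespace RAC

open CoxeterSystem List Classical

variable {V : Type*} [DecidableEq V] {Γ : SimpleGraph V} [DecidableRel Γ.Adj]
variable {W : Type*} [Group W] (ccs : CoxeterSystem (racMatrix Γ) W)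

local prefix:100 "s" => ccs.simple
local prefix:100 "π" => ccs.wordProd
local prefix:100 "ℓ" => ccs.length

theorem racM_apply (i j : V) :
    (racMatrix Γ) i j = if i = j then 1 else if Γ.Adj i j then 2 else 0 := rfl

theorem racM_adj {i j : V} (h : Γ.Adj i j) : (racMatrix Γ) i j = 2 := by
  rw [racM_apply, if_neg h.ne, if_pos h]

theorem simple_comm_of_adj {i j : V} (h : Γ.Adj i j) :
    s i * s j = s j * s i := by
  have h2 := ccs.simple_mul_simple_pow i j
  rw [racM_adj h, pow_two] at h2
  calc s i * s j = (s i * s j)⁻¹ := by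
        rw [inv_eq_of_mul_eq_one_right]; rw [← mul_assoc] at h2 ⊢; exact h2
    _ = s j * s i := by rw [mul_inv_rev, ccs.inv_simple, ccs.inv_simple]

/-- generic liftability for maps sending each generator to an involution-or-one,
with adjacent generators commuting. -/
theorem racLiftable {G : Type*} [Monoid G] (f : V → G)
    (hinv : ∀ i, f i * f i = 1)
    (hcomm : ∀ i j, Γ.Adj i j → f i * f j = f j * f i) :
    (racMatrix Γ).IsLiftable f := by
  intro i j
  rw [racM_apply]
  by_cases h : i = j
  · subst h; simp [pow_one, hinv]
  · rw [if_neg h]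
    by_cases ha : Γ.Adj i j
    · rw [if_pos ha, pow_two, mul_assoc, ← mul_assoc (f j), ← hcomm i j ha, mul_assoc,
        hinv, mul_one, hinv]
    · rw [if_neg ha, pow_zero]

/-- The parity homomorphism counting occurrences of the letter `j` mod 2. -/
noncomputable def parityHom (j : V) : W →* Multiplicative (ZMod 2) :=
  ccs.lift ⟨fun k => Multiplicative.ofAdd (if k = j then 1 else 0), by
    apply racLiftable
    · intro i
      rw [← ofAdd_add]
      rcases eq_or_ne i j with h | h
      · simp only [h, if_pos rfl]; rfl
      · simp [h]
    · intro i k _; exact mul_comm _ _⟩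

theorem parityHom_simple (j k : V) :
    parityHom ccs j (s k) = Multiplicative.ofAdd (if k = j then 1 else 0) :=
  ccs.lift_apply_simple _ k

theorem parityHom_wordProd (j : V) (ω : List V) :
    parityHom ccs j (π ω) = Multiplicative.ofAdd ((ω.count j : ZMod 2)) := by
  induction ω with
  | nil => simp only [wordProd_nil, map_one, count_nil, Nat.cast_zero]; rfl
  | cons i ω ih =>
    rw [ccs.wordProd_cons, map_mul, parityHom_simple, ih, ← ofAdd_add, List.count_cons]
    congr 1
    rcases eq_or_ne i j with h | h <;> simp [h, add_comm]

/-- The retraction homomorphism onto the parabolic `W_Λ`. -/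
noncomputable def retraction (Λ : Set V) : W →* W :=
  ccs.lift ⟨fun k => if k ∈ Λ then s k else 1, by
    apply racLiftable
    · intro i
      split <;> simp [ccs.simple_mul_simple_self]
    · intro i k h
      split <;> split <;> simp [simple_comm_of_adj ccs h]⟩

theorem retraction_simple (Λ : Set V) (k : V) :
    retraction ccs Λ (s k) = if k ∈ Λ then s k else 1 :=
  ccs.lift_apply_simple _ k

theorem retraction_wordProd (Λ : Set V) (ω : List V) :
    retraction ccs Λ (π ω) = π (ω.filter (fun k => k ∈ Λ)) := by
  induction ω with
  | nil => simp
  | cons i ω ih =>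
    rw [ccs.wordProd_cons, map_mul, retraction_simple, ih, List.filter_cons]
    by_cases h : i ∈ Λ
    · rw [if_pos h, if_pos (by simpa using h), ccs.wordProd_cons]
    · rw [if_neg h, if_neg (by simpa using h), one_mul]



/- ### Part 2: the Tits permutation representation and strong exchange -/

theorem zmod2_add_self : ∀ x : ZMod 2, x + x = 0 := by decide
theorem zmod2_cases : ∀ x : ZMod 2, x = 0 ∨ x = 1 := by decide
theorem zmod2_one_ne_zero : (1 : ZMod 2) ≠ 0 := by decide

theorem conj_conj {a p : W} (ha : a * a = 1) : a * (a * p * a) * a = p := by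
  calc a * (a * p * a) * a = (a * a) * p * (a * a) := by group
  _ = p := by rw [ha, one_mul, mul_one]

theorem conj_simple_eq_iff (i : V) (p q : W) : s i * p * s i = q ↔ p = s i * q * s i := by
  constructor
  · rintro rfl; rw [conj_conj (ccs.simple_mul_simple_self i)]
  · rintro rfl; rw [conj_conj (ccs.simple_mul_simple_self i)]

/-- underlying function of the basic involution of the Tits representation. -/
noncomputable def titsFun (i : V) : W × ZMod 2 → W × ZMod 2 :=
  fun p => (s i * p.1 * s i, p.2 + if p.1 = s i then 1 else 0)

theorem titsFun_involutive (i : V) : Function.Involutive (titsFun ccs i) := by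
  intro p
  have h2 : (s i * p.1 * s i = s i) ↔ p.1 = s i := by
    rw [conj_simple_eq_iff, ccs.simple_mul_simple_self, one_mul]
  apply Prod.ext
  · exact conj_conj (ccs.simple_mul_simple_self i)
  · show (p.2 + _) + _ = p.2
    simp only [titsFun, h2, add_assoc, zmod2_add_self, add_zero]

/-- The basic involutions of the Tits permutation representation. -/
noncomputable def titsPerm (i : V) : Equiv.Perm (W × ZMod 2) :=
  Function.Involutive.toPerm _ (titsFun_involutive ccs i)

theorem titsPerm_apply (i : V) (p : W × ZMod 2) :
    titsPerm ccs i p = (s i * p.1 * s i, p.2 + if p.1 = s i then 1 else 0) := rfl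

theorem simple_conj_simple_of_adj {i j : V} (h : Γ.Adj i j) : s i * s j * s i = s j := by
  rw [simple_comm_of_adj ccs h, mul_assoc, ccs.simple_mul_simple_self, mul_one]

/-- The Tits permutation representation. -/
noncomputable def titsRep : W →* Equiv.Perm (W × ZMod 2) :=
  ccs.lift ⟨fun i => titsPerm ccs i, by
    apply racLiftable
    · intro i
      apply Equiv.ext
      intro p
      rw [Equiv.Perm.mul_apply, Equiv.Perm.one_apply]
      exact titsFun_involutive ccs i p
    · intro i j h
      apply Equiv.ext
      intro p
      rw [Equiv.Perm.mul_apply, Equiv.Perm.mul_apply, titsPerm_apply, titsPerm_apply,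
        titsPerm_apply, titsPerm_apply]
      apply Prod.ext
      · show s i * (s j * p.1 * s j) * s i = s j * (s i * p.1 * s i) * s j
        have e1 : s i * (s j * p.1 * s j) * s i = (s i * s j) * p.1 * (s j * s i) := by group
        have e2 : s j * (s i * p.1 * s i) * s j = (s j * s i) * p.1 * (s i * s j) := by group
        rw [e1, e2, simple_comm_of_adj ccs h]
      · show p.2 + _ + _ = p.2 + _ + _
        simp only [conj_simple_eq_iff ccs, simple_conj_simple_of_adj ccs h,
          simple_conj_simple_of_adj ccs (Γ.adj_symm h)]
        ring⟩

theorem titsRep_simple (i : V) : titsRep ccs (s i) = titsPerm ccs i :=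
  ccs.lift_apply_simple _ i

/-- The `ZMod 2`-valued reflection cocycle. -/
noncomputable def nn (w t : W) : ZMod 2 := (titsRep ccs w (t, 0)).2

theorem titsRep_fst (w : W) (p : W × ZMod 2) : (titsRep ccs w p).1 = w * p.1 * w⁻¹ := by
  induction w using ccs.simple_induction_left with
  | one => simp
  | mul_simple_left w i ih =>
    rw [map_mul, Equiv.Perm.mul_apply, titsRep_simple, titsPerm_apply]
    show s i * _ * s i = _
    rw [ih, mul_inv_rev, ccs.inv_simple]
    group

theorem titsRep_snd (w : W) (t : W) (ε : ZMod 2) :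
    (titsRep ccs w (t, ε)).2 = ε + nn ccs w t := by
  unfold nn
  induction w using ccs.simple_induction_left with
  | one => simp
  | mul_simple_left w i ih =>
    rw [map_mul, Equiv.Perm.mul_apply, Equiv.Perm.mul_apply, titsRep_simple, titsPerm_apply,
      titsPerm_apply]
    show (titsRep ccs w (t, ε)).2 + _ = ε + ((titsRep ccs w (t, 0)).2 + _)
    rw [ih]
    have : ((titsRep ccs w (t, ε)).1 = s i) ↔ ((titsRep ccs w (t, 0)).1 = s i) := by
      rw [titsRep_fst, titsRep_fst]
    simp only [this]
    ring

theorem titsRep_apply (w : W) (t : W) (ε : ZMod 2) :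
    titsRep ccs w (t, ε) = (w * t * w⁻¹, ε + nn ccs w t) := by
  apply Prod.ext
  · rw [titsRep_fst]
  · rw [titsRep_snd]

theorem nn_mul (a b t : W) : nn ccs (a * b) t = nn ccs b t + nn ccs a (b * t * b⁻¹) := by
  unfold nn
  rw [map_mul, Equiv.Perm.mul_apply]
  conv_lhs => rw [show ((titsRep ccs b) (t, 0)) = (b * t * b⁻¹, nn ccs b t) from titsRep_apply ccs b t 0 |>.trans (by rw [zero_add])]
  rw [titsRep_snd]
  rfl

theorem nn_one (t : W) : nn ccs 1 t = 0 := by unfold nn; simp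

theorem nn_simple (i : V) (t : W) : nn ccs (s i) t = if t = s i then 1 else 0 := by
  unfold nn
  rw [titsRep_simple, titsPerm_apply]
  simp

theorem nn_inv (w t : W) : nn ccs w⁻¹ (w * t * w⁻¹) = nn ccs w t := by
  have h := nn_mul ccs w⁻¹ w t
  rw [inv_mul_cancel, nn_one] at h
  rcases zmod2_cases (nn ccs w t) with h' | h' <;>
    rcases zmod2_cases (nn ccs w⁻¹ (w * t * w⁻¹)) with h'' | h'' <;>
      rw [h', h''] at h ⊢ <;> first | rfl | (exfalso; revert h; decide)

theorem nn_wordProd_mem (ω : List V) (t : W) (h : nn ccs (π ω) t = 1) :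
    t ∈ ccs.rightInvSeq ω := by
  induction ω with
  | nil => rw [ccs.wordProd_nil, nn_one] at h; exact absurd h.symm zmod2_one_ne_zero
  | cons i ω ih =>
    rw [ccs.wordProd_cons, nn_mul, nn_simple] at h
    show t ∈ (π ω)⁻¹ * s i * (π ω) :: ccs.rightInvSeq ω
    by_cases hc : (π ω) * t * (π ω)⁻¹ = s i
    · exact List.mem_cons.mpr (Or.inl (by rw [← hc]; group))
    · rw [if_neg hc, add_zero] at h
      exact List.mem_cons_of_mem _ (ih h)

theorem nn_reflection_self {t : W} (ht : ccs.IsReflection t) : nn ccs t t = 1 := by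
  obtain ⟨w, i, rfl⟩ := ht
  have key : w * s i * w⁻¹ = w * (s i * w⁻¹) := by group
  rw [key, nn_mul]
  have e1 : s i * w⁻¹ * (w * (s i * w⁻¹)) * (s i * w⁻¹)⁻¹ = s i := by group
  rw [e1]
  have e2 : s i * w⁻¹ = s i * w⁻¹ := rfl
  rw [show (s i * w⁻¹ : W) = s i * w⁻¹ from rfl]
  have h3 : nn ccs (s i * w⁻¹) (w * (s i * w⁻¹)) = nn ccs w⁻¹ (w * s i * w⁻¹) + 1 := by
    have : w * (s i * w⁻¹) = w * s i * w⁻¹ := by group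
    rw [this, show (s i * w⁻¹ : W) = s i * w⁻¹ from rfl]
    have hm := nn_mul ccs (s i) w⁻¹ (w * s i * w⁻¹)
    have e3 : w⁻¹ * (w * s i * w⁻¹) * (w⁻¹)⁻¹ = s i := by group
    rw [e3, nn_simple, if_pos rfl] at hm
    exact hm
  rw [h3, nn_inv]
  calc nn ccs w (s i) + 1 + nn ccs w (s i)
      = (nn ccs w (s i) + nn ccs w (s i)) + 1 := by ring
    _ = 1 := by rw [zmod2_add_self, zero_add]

theorem exists_eraseIdx_right (ω : List V) (t : W) (h : nn ccs (π ω) t = 1) :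
    ∃ k, k < ω.length ∧ π ω * t = π (ω.eraseIdx k) := by
  have hmem := nn_wordProd_mem ccs ω t h
  obtain ⟨k, hk, hget⟩ := List.mem_iff_getElem.mp hmem
  have hk' : k < ω.length := by simpa using hk
  refine ⟨k, hk', ?_⟩
  have hgd : (ccs.rightInvSeq ω).getD k 1 = t := by rw [List.getD_eq_getElem _ _ hk, hget]
  rw [← hgd]
  exact ccs.wordProd_mul_getD_rightInvSeq ω k

theorem exists_eraseIdx_left (ω : List V) (t : W) (h : nn ccs (π ω)⁻¹ t = 1) :
    ∃ k, k < ω.length ∧ t * π ω = π (ω.eraseIdx k) := by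
  have h' : nn ccs (π ω.reverse) t = 1 := by rwa [ccs.wordProd_reverse]
  have hmem := nn_wordProd_mem ccs ω.reverse t h'
  rw [ccs.rightInvSeq_reverse, List.mem_reverse] at hmem
  obtain ⟨k, hk, hget⟩ := List.mem_iff_getElem.mp hmem
  have hk' : k < ω.length := by simpa using hk
  refine ⟨k, hk', ?_⟩
  have hgd : (ccs.leftInvSeq ω).getD k 1 = t := by rw [List.getD_eq_getElem _ _ hk, hget]
  rw [← hgd]
  exact ccs.getD_leftInvSeq_mul_wordProd ω k

theorem length_mul_lt_of_nn_eq_one {w t : W} (h : nn ccs w t = 1) :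
    ℓ (w * t) < ℓ w := by
  obtain ⟨ω, hlen, rfl⟩ := ccs.exists_reduced_word w
  obtain ⟨k, hk, heq⟩ := exists_eraseIdx_right ccs ω t h
  rw [heq]
  calc ℓ (π (ω.eraseIdx k)) ≤ (ω.eraseIdx k).length := ccs.length_wordProd_le _
    _ < ω.length := by have := List.length_eraseIdx_add_one hk; omega
    _ = ℓ (π ω) := hlen.symm

theorem nn_eq_one_iff {w t : W} (ht : ccs.IsReflection t) :
    nn ccs w t = 1 ↔ ℓ (w * t) < ℓ w := by
  constructor
  · exact length_mul_lt_of_nn_eq_one ccs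
  · intro h
    rcases zmod2_cases (nn ccs w t) with h0 | h1
    · exfalso
      have hmul : nn ccs (w * t) t = 1 := by
        have := nn_mul ccs w t t
        rw [show t * t * t⁻¹ = t by rw [ht.mul_self, one_mul, ht.inv], nn_reflection_self ccs ht, h0,
          add_zero] at this
        exact this
      have := length_mul_lt_of_nn_eq_one ccs hmul
      rw [mul_assoc, ht.mul_self, mul_one] at this
      omega
    · exact h1

theorem nn_inv_eq_one_iff {w t : W} (ht : ccs.IsReflection t) :
    nn ccs w⁻¹ t = 1 ↔ ℓ (t * w) < ℓ w := by
  rw [nn_eq_one_iff ccs ht]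
  have e1 : ℓ (w⁻¹ * t) = ℓ (t * w) := by
    rw [← ccs.length_inv, mul_inv_rev, inv_inv, ht.inv]
  rw [e1, ccs.length_inv]

/- ### Part 3: words and parabolic subgroups -/

theorem exists_reduced_sublist (ω : List V) :
    ∃ ω' : List V, ccs.IsReduced ω' ∧ π ω' = π ω ∧ ∀ i ∈ ω', i ∈ ω := by
  generalize hn : ω.length = n
  induction n using Nat.strong_induction_on generalizing ω with
  | _ n IH =>
  subst hn
  by_cases hred : ccs.IsReduced ω
  · exact ⟨ω, hred, rfl, fun i hi => hi⟩
  · have hlt : ℓ (π ω) < ω.length :=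
      lt_of_le_of_ne (ccs.length_wordProd_le ω) hred
    have hex : ∃ j, ℓ (π (ω.take j)) < j := ⟨ω.length, by rwa [List.take_length]⟩
    have hj : ℓ (π (ω.take (Nat.find hex))) < Nat.find hex := Nat.find_spec hex
    set j := Nat.find hex with hjdef
    have hj_le : j ≤ ω.length := Nat.find_le (by rwa [List.take_length])
    have hj_pos : 1 ≤ j := by
      by_contra hc
      have : j = 0 := by omega
      rw [this] at hj; omega
    have hj1 : ¬ (ℓ (π (ω.take (j-1))) < j-1) := Nat.find_min hex (by omega)
    have hlen_take : (ω.take (j-1)).length = j-1 := by rw [List.length_take]; omega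
    have hx : ℓ (π (ω.take (j-1))) = j-1 := by
      have := ccs.length_wordProd_le (ω.take (j-1))
      omega
    have hidx : j - 1 < ω.length := by omega
    have htake : ω.take (j-1) ++ [ω[j-1]] = ω.take j := by
      have h1 := List.take_concat_get' ω (j-1) hidx
      have h2 : j - 1 + 1 = j := by omega
      rwa [h2] at h1
    have hxsi : π (ω.take j) = π (ω.take (j-1)) * s ω[j-1] := by
      rw [← htake, ccs.wordProd_append, ccs.wordProd_singleton]
    have hdesc : ℓ (π (ω.take (j-1)) * s ω[j-1]) < ℓ (π (ω.take (j-1))) := by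
      rcases ccs.length_mul_simple (π (ω.take (j-1))) ω[j-1] with hc | hc <;>
        rw [← hxsi] at * <;> omega
    have hnn : nn ccs (π (ω.take (j-1))) (s ω[j-1]) = 1 :=
      (nn_eq_one_iff ccs (ccs.isReflection_simple ω[j-1])).mpr hdesc
    obtain ⟨k, hk, hkeq⟩ := exists_eraseIdx_right ccs (ω.take (j-1)) (s ω[j-1]) hnn
    rw [hlen_take] at hk
    have hπ : π ((ω.take (j-1)).eraseIdx k ++ ω.drop j) = π ω := by
      rw [ccs.wordProd_append, ← hkeq, ← hxsi]
      conv_rhs => rw [← List.take_append_drop j ω]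
      rw [ccs.wordProd_append]
    have hlen'' : ((ω.take (j-1)).eraseIdx k ++ ω.drop j).length < ω.length := by
      rw [List.length_append, List.length_drop]
      have := List.length_eraseIdx_add_one (by rw [hlen_take]; exact hk)
      omega
    obtain ⟨ω', hred', heq', hsub'⟩ :=
      IH _ hlen'' ((ω.take (j-1)).eraseIdx k ++ ω.drop j) rfl
    refine ⟨ω', hred', by rw [heq', hπ], fun i hi => ?_⟩
    rcases List.mem_append.mp (hsub' i hi) with hm | hm
    · exact (List.take_sublist (j-1) ω).mem (((ω.take (j-1)).eraseIdx_sublist k).mem hm)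
    · exact (List.drop_sublist j ω).mem hm

/-- The standard parabolic subgroup. -/
def par (Λ : Set V) : Subgroup W := Subgroup.closure (ccs.simple '' Λ)

theorem mem_par_iff (Λ : Set V) (w : W) :
    w ∈ par ccs Λ ↔ ∃ ω : List V, (∀ i ∈ ω, i ∈ Λ) ∧ π ω = w := by
  constructor
  · intro hw
    induction hw using Subgroup.closure_induction with
    | mem x hx =>
      obtain ⟨i, hi, rfl⟩ := hx
      exact ⟨[i], by simpa using hi, ccs.wordProd_singleton i⟩
    | one => exact ⟨[], by simp, ccs.wordProd_nil⟩
    | mul x y _ _ ihx ihy =>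
      obtain ⟨ω₁, h₁, rfl⟩ := ihx
      obtain ⟨ω₂, h₂, rfl⟩ := ihy
      exact ⟨ω₁ ++ ω₂, by
        intro i hi; rcases List.mem_append.mp hi with h | h
        exacts [h₁ i h, h₂ i h], ccs.wordProd_append ω₁ ω₂⟩
    | inv x _ ihx =>
      obtain ⟨ω₁, h₁, rfl⟩ := ihx
      exact ⟨ω₁.reverse, fun i hi => h₁ i (List.mem_reverse.mp hi), ccs.wordProd_reverse ω₁⟩
  · rintro ⟨ω, hω, rfl⟩
    induction ω with
    | nil => rw [ccs.wordProd_nil]; exact one_mem _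
    | cons i ω ih =>
      rw [ccs.wordProd_cons]
      exact mul_mem (Subgroup.subset_closure ⟨i, hω i (List.mem_cons_self), rfl⟩)
        (ih (fun i' hi' => hω i' (List.mem_cons_of_mem _ hi')))

theorem exists_reduced_word_par {Λ : Set V} {w : W} (h : w ∈ par ccs Λ) :
    ∃ ω : List V, ccs.IsReduced ω ∧ (∀ i ∈ ω, i ∈ Λ) ∧ π ω = w := by
  obtain ⟨ω, hω, rfl⟩ := (mem_par_iff ccs Λ w).mp h
  obtain ⟨ω', hred, heq, hsub⟩ := exists_reduced_sublist ccs ω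
  exact ⟨ω', hred, fun i hi => hω i (hsub i hi), heq⟩

theorem par_mono {Λ₁ Λ₂ : Set V} (h : Λ₁ ⊆ Λ₂) : par (W := W) ccs Λ₁ ≤ par ccs Λ₂ :=
  Subgroup.closure_mono (Set.image_mono h)

theorem parityHom_eq_one_of_mem_par {Λ : Set V} {j : V} (hj : j ∉ Λ) {w : W}
    (hw : w ∈ par ccs Λ) : parityHom ccs j w = 1 := by
  obtain ⟨ω, hω, rfl⟩ := (mem_par_iff ccs Λ w).mp hw
  rw [parityHom_wordProd]
  have : ω.count j = 0 := List.count_eq_zero_of_not_mem (fun hc => hj (hω j hc))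
  rw [this]
  rfl

theorem mem_of_simple_mem_par {Λ : Set V} {j : V} (h : s j ∈ par ccs Λ) : j ∈ Λ := by
  by_contra hj
  have h1 := parityHom_eq_one_of_mem_par ccs hj h
  rw [parityHom_simple, if_pos rfl] at h1
  have : (1 : ZMod 2) = 0 := by
    have := congrArg Multiplicative.toAdd h1
    simpa using this
  exact zmod2_one_ne_zero this

theorem exists_leftDescent_par {Λ : Set V} {v : W} (hv : v ∈ par ccs Λ) (hne : v ≠ 1) :
    ∃ i ∈ Λ, ccs.IsLeftDescent v i := by
  obtain ⟨ω, hred, hsub, rfl⟩ := exists_reduced_word_par ccs hv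
  match ω, hred, hsub with
  | [], _, _ => exact absurd (ccs.wordProd_nil) hne
  | i :: ω', hred, hsub =>
    refine ⟨i, hsub i (List.mem_cons_self), ?_⟩
    unfold CoxeterSystem.IsLeftDescent
    have hcan : s i * π (i :: ω') = π ω' := by
      rw [ccs.wordProd_cons, ccs.simple_mul_simple_cancel_left]
    rw [hcan]
    calc ℓ (π ω') ≤ ω'.length := ccs.length_wordProd_le ω'
      _ < (i :: ω').length := by simp
      _ = ℓ (π (i :: ω')) := hred.symm

theorem exists_rightDescent_par {Λ : Set V} {v : W} (hv : v ∈ par ccs Λ) (hne : v ≠ 1) :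
    ∃ i ∈ Λ, ccs.IsRightDescent v i := by
  obtain ⟨i, hi, hd⟩ := exists_leftDescent_par ccs (inv_mem hv) (by simpa using hne)
  exact ⟨i, hi, ccs.isLeftDescent_inv_iff.mp hd⟩

/- ### Part 4: coset minimality -/

theorem length_mul_of_min {Λ : Set V} {u₀ : W}
    (hmin : ∀ z ∈ par (W := W) ccs Λ, ℓ u₀ ≤ ℓ (z * u₀)) :
    ∀ v ∈ par (W := W) ccs Λ, ℓ (v * u₀) = ℓ v + ℓ u₀ := by
  intro v hv
  generalize hn : ℓ v = n
  induction n using Nat.strong_induction_on generalizing v with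
  | _ n IH =>
  subst hn
  by_cases hone : v = 1
  · subst hone; simp
  · obtain ⟨i, hiΛ, hdesc⟩ := exists_leftDescent_par ccs hv hone
    set v' := s i * v with hv'def
    have hv' : v' ∈ par ccs Λ :=
      mul_mem (Subgroup.subset_closure ⟨i, hiΛ, rfl⟩) hv
    have hveq : s i * v' = v := by
      rw [hv'def, ccs.simple_mul_simple_cancel_left]
    have hlv' : ℓ v' + 1 = ℓ v := by
      unfold CoxeterSystem.IsLeftDescent at hdesc
      rw [← hv'def] at hdesc
      rcases ccs.length_simple_mul v' i with hc | hc
      · rw [hveq] at hc; omega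
      · rw [hveq] at hc; omega
    have ihv' : ℓ (v' * u₀) = ℓ v' + ℓ u₀ := IH (ℓ v') (by omega) v' hv' rfl
    rcases ccs.length_simple_mul (v' * u₀) i with hc | hc
    · rw [← mul_assoc, hveq] at hc
      omega
    · -- descent case: derive a contradiction
      exfalso
      have hdesc2 : ℓ (s i * (v' * u₀)) < ℓ (v' * u₀) := by omega
      obtain ⟨ω', hredω', hsubω', hπω'⟩ := exists_reduced_word_par ccs hv'
      obtain ⟨μ, hlenμ, hμ⟩ := ccs.exists_reduced_word u₀
      have hword : π (ω' ++ μ) = v' * u₀ := by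
        rw [ccs.wordProd_append, hπω', ← hμ]
      have hnn : nn ccs (π (ω' ++ μ))⁻¹ (s i) = 1 := by
        rw [hword]
        exact (nn_inv_eq_one_iff ccs (ccs.isReflection_simple i)).mpr hdesc2
      obtain ⟨k, hk, hkeq⟩ := exists_eraseIdx_left ccs (ω' ++ μ) (s i) hnn
      rw [hword] at hkeq
      rw [List.length_append] at hk
      have hlω' : ω'.length = ℓ v' := by rw [← hπω']; exact hredω'.symm
      by_cases hcase : k < ω'.length
      · rw [List.eraseIdx_append_of_lt_length hcase, ccs.wordProd_append, ← hμ] at hkeq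
        have h5 : (s i * v') * u₀ = π (ω'.eraseIdx k) * u₀ := by rw [mul_assoc]; exact hkeq
        have this := mul_right_cancel h5
        rw [hveq] at this
        have hle : ℓ v ≤ (ω'.eraseIdx k).length := by
          rw [this]; exact ccs.length_wordProd_le _
        have := List.length_eraseIdx_add_one hcase
        omega
      · push_neg at hcase
        rw [List.eraseIdx_append_of_length_le hcase, ccs.wordProd_append, hπω'] at hkeq
        have hz : (v'⁻¹ * s i * v') * u₀ = π (μ.eraseIdx (k - ω'.length)) := by
          calc (v'⁻¹ * s i * v') * u₀ = v'⁻¹ * (s i * (v' * u₀)) := by group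
            _ = v'⁻¹ * (v' * π (μ.eraseIdx (k - ω'.length))) := by rw [hkeq]
            _ = π (μ.eraseIdx (k - ω'.length)) := by group
        have hzmem : v'⁻¹ * s i * v' ∈ par ccs Λ :=
          mul_mem (mul_mem (inv_mem hv') (Subgroup.subset_closure ⟨i, hiΛ, rfl⟩)) hv'
        have hminz := hmin _ hzmem
        rw [hz] at hminz
        have hle : ℓ (π (μ.eraseIdx (k - ω'.length))) ≤ (μ.eraseIdx (k - ω'.length)).length :=
          ccs.length_wordProd_le _
        have hkμ : k - ω'.length < μ.length := by omega
        have := List.length_eraseIdx_add_one hkμ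
        have hlenμ' : μ.length = ℓ u₀ := by subst hμ; exact hlenμ.symm
        omega

theorem exists_min_coset (Λ : Set V) (u : W) :
    ∃ a u₀, a ∈ par (W := W) ccs Λ ∧ u = a * u₀ ∧
      ∀ z ∈ par (W := W) ccs Λ, ℓ u₀ ≤ ℓ (z * u₀) := by
  classical
  have hex : ∃ n, ∃ x : W, (∃ a ∈ par (W := W) ccs Λ, u = a * x) ∧ ℓ x = n :=
    ⟨ℓ u, u, ⟨1, one_mem _, (one_mul u).symm⟩, rfl⟩
  obtain ⟨x, ⟨a, ha, hax⟩, hlx⟩ := Nat.find_spec hex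
  refine ⟨a, x, ha, hax, ?_⟩
  intro z hz
  have hfind : Nat.find hex ≤ ℓ (z * x) :=
    Nat.find_le ⟨z * x, ⟨a * z⁻¹, mul_mem ha (inv_mem hz), by rw [hax]; group⟩, rfl⟩
  omega

theorem length_mul_of_no_leftDescent {Λ : Set V} {u : W}
    (h : ∀ i ∈ Λ, ¬ ccs.IsLeftDescent u i) :
    ∀ w ∈ par (W := W) ccs Λ, ℓ (w * u) = ℓ w + ℓ u := by
  obtain ⟨a, u₀, ha, rfl, hmin⟩ := exists_min_coset ccs Λ u
  have hA := length_mul_of_min ccs hmin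
  have haone : a = 1 := by
    by_contra hne
    obtain ⟨i, hiΛ, hdesc⟩ := exists_leftDescent_par ccs ha hne
    apply h i hiΛ
    unfold CoxeterSystem.IsLeftDescent at hdesc ⊢
    have h1 : ℓ (s i * (a * u₀)) ≤ ℓ (s i * a) + ℓ u₀ := by
      rw [← mul_assoc]
      have h2 := hA (s i * a) (mul_mem (Subgroup.subset_closure ⟨i, hiΛ, rfl⟩) ha)
      omega
    have h3 := hA a ha
    omega
  subst haone
  rw [one_mul] at *
  exact hA

theorem length_mul_of_no_rightDescent {Λ : Set V} {u : W}
    (h : ∀ i ∈ Λ, ¬ ccs.IsRightDescent u i) :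
    ∀ w ∈ par (W := W) ccs Λ, ℓ (u * w) = ℓ u + ℓ w := by
  intro w hw
  have h' : ∀ i ∈ Λ, ¬ ccs.IsLeftDescent u⁻¹ i := by
    intro i hi hd
    exact h i hi (ccs.isLeftDescent_inv_iff.mp hd)
  have := length_mul_of_no_leftDescent ccs h' w⁻¹ (inv_mem hw)
  rw [← ccs.length_inv, mul_inv_rev, this, ccs.length_inv, ccs.length_inv, add_comm]

/- ### Part 5: dihedral analysis for non-adjacent pairs -/

section Dihedral

variable {i j : V}

open DihedralGroup

/-- homomorphism to the infinite dihedral group detecting a non-adjacent pair. -/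
noncomputable def dhom (hna : ¬ Γ.Adj i j) : W →* DihedralGroup 0 :=
  ccs.lift ⟨fun k => if k = i then sr 0 else if k = j then sr 1 else 1, by
    apply racLiftable
    · intro k
      split
      · exact sr_mul_self 0
      · split
        · exact sr_mul_self 1
        · exact one_mul 1
    · intro a b hab
      have hne2 : ¬(a = i ∧ b = j) := fun ⟨ha, hb⟩ => hna (ha ▸ hb ▸ hab)
      have hne3 : ¬(a = j ∧ b = i) := fun ⟨ha, hb⟩ => hna (Γ.adj_symm (ha ▸ hb ▸ hab))
      have hne4 : a ≠ b := hab.ne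
      by_cases ha : a = i <;> by_cases hb : b = i <;> by_cases ha' : a = j <;>
        by_cases hb' : b = j <;> simp_all⟩


theorem dhom_simple_i (hna : ¬ Γ.Adj i j) : dhom ccs hna (s i) = sr 0 := by
  unfold dhom; rw [ccs.lift_apply_simple]; simp

theorem dhom_simple_j (hne : i ≠ j) (hna : ¬ Γ.Adj i j) : dhom ccs hna (s j) = sr 1 := by
  unfold dhom; rw [ccs.lift_apply_simple]; simp [hne.symm]

theorem dihedral_r_pow (a : ZMod 0) (p : ℕ) :
    (r a : DihedralGroup 0) ^ p = r (a * (p : ZMod 0)) := by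
  induction p with
  | zero => rw [pow_zero, Nat.cast_zero, mul_zero, one_def]
  | succ p ih =>
    rw [pow_succ, ih, r_mul_r]
    congr 1
    push_cast
    ring

theorem dhom_alt_ij (hne : i ≠ j) (hna : ¬ Γ.Adj i j) (m : ℕ) :
    dhom ccs hna (π (alternatingWord i j m)) =
      if Even m then r ((m / 2 : ℕ) : ZMod 0) else sr (1 + ((m / 2 : ℕ) : ZMod 0)) := by
  rw [ccs.prod_alternatingWord_eq_mul_pow, map_mul, map_pow, map_mul,
    dhom_simple_i ccs hna, dhom_simple_j ccs hne hna, sr_mul_sr, dihedral_r_pow]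
  split
  · rw [map_one, one_mul]
    congr 1
    push_cast
    ring
  · rw [dhom_simple_j ccs hne hna, sr_mul_r]
    congr 1
    push_cast
    ring

theorem dhom_alt_ji (hne : i ≠ j) (hna : ¬ Γ.Adj i j) (m : ℕ) :
    dhom ccs hna (π (alternatingWord j i m)) =
      if Even m then r (-((m / 2 : ℕ) : ZMod 0)) else sr (-((m / 2 : ℕ) : ZMod 0)) := by
  rw [ccs.prod_alternatingWord_eq_mul_pow, map_mul, map_pow, map_mul,
    dhom_simple_j ccs hne hna, dhom_simple_i ccs hna, sr_mul_sr, dihedral_r_pow]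
  split
  · rw [map_one, one_mul]
    congr 1
    push_cast
    ring
  · rw [dhom_simple_i ccs hna, sr_mul_r]
    congr 1
    push_cast
    ring

theorem alt_inj_same (hne : i ≠ j) (hna : ¬ Γ.Adj i j) {m m' : ℕ}
    (h : π (alternatingWord i j m) = π (alternatingWord i j m')) : m = m' := by
  have h2 := congrArg (dhom ccs hna) h
  rw [dhom_alt_ij ccs hne hna, dhom_alt_ij ccs hne hna] at h2
  have em : m % 2 = 0 ∨ m % 2 = 1 := Nat.mod_two_eq_zero_or_one m
  have em' : m' % 2 = 0 ∨ m' % 2 = 1 := Nat.mod_two_eq_zero_or_one m'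
  rcases Nat.even_or_odd m with hm | hm <;> rcases Nat.even_or_odd m' with hm' | hm'
  · rw [if_pos hm, if_pos hm'] at h2
    simp only [DihedralGroup.r.injEq, Nat.cast_inj] at h2
    have e1 := Nat.even_iff.mp hm
    have e2 := Nat.even_iff.mp hm'
    omega
  · rw [if_pos hm, if_neg (Nat.not_even_iff_odd.mpr hm')] at h2
    simp at h2
  · rw [if_neg (Nat.not_even_iff_odd.mpr hm), if_pos hm'] at h2
    simp at h2
  · rw [if_neg (Nat.not_even_iff_odd.mpr hm), if_neg (Nat.not_even_iff_odd.mpr hm')] at h2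
    simp only [DihedralGroup.sr.injEq, add_right_inj, Nat.cast_inj] at h2
    have e1 := Nat.odd_iff.mp hm
    have e2 := Nat.odd_iff.mp hm'
    omega

theorem alt_inj_cross (hne : i ≠ j) (hna : ¬ Γ.Adj i j) {m m' : ℕ}
    (h : π (alternatingWord i j m) = π (alternatingWord j i m')) : m = 0 ∧ m' = 0 := by
  have h2 := congrArg (dhom ccs hna) h
  rw [dhom_alt_ij ccs hne hna, dhom_alt_ji ccs hne hna] at h2
  rcases Nat.even_or_odd m with hm | hm <;> rcases Nat.even_or_odd m' with hm' | hm'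
  · rw [if_pos hm, if_pos hm'] at h2
    simp only [DihedralGroup.r.injEq] at h2
    have h3 : ((m / 2 + m' / 2 : ℕ) : ZMod 0) = 0 := by
      push_cast
      rw [h2]
      ring
    have h4 : m / 2 + m' / 2 = 0 := by exact_mod_cast h3
    have e1 := Nat.even_iff.mp hm
    have e2 := Nat.even_iff.mp hm'
    omega
  · rw [if_pos hm, if_neg (Nat.not_even_iff_odd.mpr hm')] at h2
    simp at h2
  · rw [if_neg (Nat.not_even_iff_odd.mpr hm), if_pos hm'] at h2
    simp at h2
  · rw [if_neg (Nat.not_even_iff_odd.mpr hm), if_neg (Nat.not_even_iff_odd.mpr hm')] at h2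
    simp only [DihedralGroup.sr.injEq] at h2
    have h3 : ((1 + m / 2 + m' / 2 : ℕ) : ZMod 0) = 0 := by
      push_cast
      rw [show ((1 : ZMod 0) + ↑(m / 2) + ↑(m' / 2) : ZMod 0) = (1 + ↑(m/2)) + ↑(m'/2) by ring,
        h2]
      ring
    have h4 : 1 + m / 2 + m' / 2 = 0 := by exact_mod_cast h3
    omega

theorem alt_step_up (a b : V) (m : ℕ) :
    π (alternatingWord a b (m+1)) = s (if Even m then b else a) * π (alternatingWord a b m) := by
  rw [alternatingWord_succ', ccs.wordProd_cons]

theorem alt_step_down (a b : V) (m : ℕ) :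
    s (if Even m then b else a) * π (alternatingWord a b (m+1)) = π (alternatingWord a b m) := by
  rw [alt_step_up, ccs.simple_mul_simple_cancel_left]

theorem mem_alternatingWord (a b : V) (m : ℕ) : ∀ k ∈ alternatingWord a b m, k = a ∨ k = b := by
  induction m generalizing a b with
  | zero => intro k hk; simp [alternatingWord] at hk
  | succ m ih =>
    intro k hk
    rw [alternatingWord_succ', List.mem_cons] at hk
    rcases hk with rfl | hk
    · split <;> simp
    · exact ih a b k hk

theorem simple_mul_alt (a b c : V) (hab : a ≠ b) (hc : c = a ∨ c = b) (m : ℕ) :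
    ∃ m', m' ≤ m + 1 ∧
      (s c * π (alternatingWord a b m) = π (alternatingWord a b m') ∨
       s c * π (alternatingWord a b m) = π (alternatingWord b a m')) := by
  by_cases hc0 : c = (if Even m then b else a)
  · exact ⟨m + 1, le_refl _, Or.inl (by rw [hc0, ← alt_step_up])⟩
  · have hc1 : c = (if Even m then a else b) := by
      rcases hc with rfl | rfl
      · by_cases hm : Even m
        · rw [if_pos hm]
        · rw [if_neg hm] at hc0; exact absurd rfl hc0
      · by_cases hm : Even m
        · rw [if_pos hm] at hc0; exact absurd rfl hc0
        · rw [if_neg hm]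
    match m with
    | 0 =>
      refine ⟨1, by omega, Or.inr ?_⟩
      have : c = a := by simpa using hc1
      subst this
      rw [show alternatingWord b c 1 = [c] from rfl]
      simp [alternatingWord]
    | Nat.succ m' =>
      refine ⟨m', by omega, Or.inl ?_⟩
      have hcflip : c = (if Even m' then b else a) := by
        rcases Nat.even_or_odd m' with hm' | hm'
        · rw [if_pos hm']
          rw [if_neg (by simp [Nat.even_add_one, hm'])] at hc1
          exact hc1
        · rw [if_neg (Nat.not_even_iff_odd.mpr hm')]
          rw [if_pos (by simp [Nat.even_add_one, Nat.not_even_iff_odd.mpr hm'])] at hc1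
          exact hc1
      rw [hcflip, alt_step_down]

theorem wordProd_pair_eq_alt {a b : V} (hab : a ≠ b) (ω : List V)
    (hsub : ∀ k ∈ ω, k = a ∨ k = b) :
    ∃ m ≤ ω.length,
      (π ω = π (alternatingWord a b m) ∨ π ω = π (alternatingWord b a m)) := by
  induction ω with
  | nil => exact ⟨0, by simp, Or.inl (by simp [alternatingWord])⟩
  | cons c ω' ih =>
    obtain ⟨m, hm, hcase⟩ := ih (fun k hk => hsub k (List.mem_cons_of_mem _ hk))
    have hc : c = a ∨ c = b := hsub c (List.mem_cons_self)
    rcases hcase with heq | heq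
    · obtain ⟨m', hm', hcase'⟩ := simple_mul_alt ccs a b c hab hc m
      rw [ccs.wordProd_cons, heq]
      rcases hcase' with h' | h'
      · exact ⟨m', by simp; omega, Or.inl h'⟩
      · exact ⟨m', by simp; omega, Or.inr h'⟩
    · obtain ⟨m', hm', hcase'⟩ := simple_mul_alt ccs b a c hab.symm hc.symm m
      rw [ccs.wordProd_cons, heq]
      rcases hcase' with h' | h'
      · exact ⟨m', by simp; omega, Or.inr h'⟩
      · exact ⟨m', by simp; omega, Or.inl h'⟩

theorem retraction_eq_wordProd (Λ : Set V) (ω : List V) :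
    ∃ ω', (∀ k ∈ ω', k ∈ Λ) ∧ ω'.length ≤ ω.length ∧ π ω' = retraction ccs Λ (π ω) := by
  refine ⟨ω.filter (fun k => k ∈ Λ), ?_, List.length_filter_le _ _,
    (retraction_wordProd ccs Λ ω).symm⟩
  intro k hk
  simpa using List.of_mem_filter hk

theorem length_alt (hne : i ≠ j) (hna : ¬ Γ.Adj i j) (m : ℕ) :
    ℓ (π (alternatingWord i j m)) = m := by
  have hle : ℓ (π (alternatingWord i j m)) ≤ m := by
    have h0 := ccs.length_wordProd_le (alternatingWord i j m)
    rwa [length_alternatingWord] at h0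
  have hfix : retraction ccs {i, j} (π (alternatingWord i j m)) = π (alternatingWord i j m) := by
    rw [retraction_wordProd]
    congr 1
    rw [List.filter_eq_self]
    intro k hk
    simp only [decide_eq_true_eq]
    rcases mem_alternatingWord i j m k hk with rfl | rfl <;> simp
  obtain ⟨ω, hred, hπ⟩ := ccs.exists_reduced_word' (π (alternatingWord i j m))
  obtain ⟨ω', hω'sub, hω'len, hω'π⟩ := retraction_eq_wordProd ccs {i, j} ω
  have hπf : π ω' = π (alternatingWord i j m) := by rw [hω'π, ← hπ, hfix]
  have hsub' : ∀ k ∈ ω', k = i ∨ k = j := by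
    intro k hk
    simpa using hω'sub k hk
  obtain ⟨m', hm', hcase⟩ := wordProd_pair_eq_alt ccs hne ω' hsub'
  have hωlen : ω.length = ℓ (π (alternatingWord i j m)) := by rw [hπ]; exact hred.symm
  rcases hcase with h' | h'
  · have : m = m' := alt_inj_same ccs hne hna (by rw [← hπf, h'])
    omega
  · have : m = 0 ∧ m' = 0 := alt_inj_cross ccs hne hna (by rw [← hπf, h'])
    omega

/-- **No element has two non-adjacent distinct left descents** in a RACG. -/
theorem no_two_nonadjacent_descents {i j : V} (hne : i ≠ j) (hna : ¬ Γ.Adj i j) {x : W}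
    (hi : ccs.IsLeftDescent x i) (hj : ccs.IsLeftDescent x j) : False := by
  obtain ⟨d, x₀, hd, rfl, hmin⟩ := exists_min_coset ccs {i, j} x
  have hA := length_mul_of_min ccs hmin
  have htrans : ∀ c ∈ ({i, j} : Set V), ccs.IsLeftDescent (d * x₀) c → ℓ (s c * d) < ℓ d := by
    intro c hc hdesc
    unfold CoxeterSystem.IsLeftDescent at hdesc
    have h1 : ℓ (s c * (d * x₀)) = ℓ (s c * d) + ℓ x₀ := by
      rw [← mul_assoc]
      exact hA _ (mul_mem (Subgroup.subset_closure ⟨c, hc, rfl⟩) hd)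
    have h2 : ℓ (d * x₀) = ℓ d + ℓ x₀ := hA d hd
    omega
  have hdi : ℓ (s i * d) < ℓ d := htrans i (by simp) hi
  have hdj : ℓ (s j * d) < ℓ d := htrans j (by simp) hj
  obtain ⟨ω, hred, hsub, hπ⟩ := exists_reduced_word_par ccs hd
  have hsub' : ∀ k ∈ ω, k = i ∨ k = j := by intro k hk; simpa using hsub k hk
  obtain ⟨m, hm, hcase⟩ := wordProd_pair_eq_alt ccs hne ω hsub'
  rcases hcase with h' | h'
  · -- d = π (alternatingWord i j m)
    have hd_eq : d = π (alternatingWord i j m) := by rw [← hπ, h']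
    have hld : ℓ d = m := by rw [hd_eq, length_alt ccs hne hna]
    have hup : s (if Even m then j else i) * d = π (alternatingWord i j (m+1)) := by
      rw [hd_eq, ← alt_step_up]
    have hlup : ℓ (s (if Even m then j else i) * d) = m + 1 := by
      rw [hup, length_alt ccs hne hna]
    by_cases hev : Even m
    · rw [if_pos hev] at hlup; omega
    · rw [if_neg hev] at hlup; omega
  · have hd_eq : d = π (alternatingWord j i m) := by rw [← hπ, h']
    have hld : ℓ d = m := by rw [hd_eq, length_alt ccs hne.symm (fun h => hna (Γ.adj_symm h))]
    have hup : s (if Even m then i else j) * d = π (alternatingWord j i (m+1)) := by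
      rw [hd_eq, ← alt_step_up]
    have hlup : ℓ (s (if Even m then i else j) * d) = m + 1 := by
      rw [hup, length_alt ccs hne.symm (fun h => hna (Γ.adj_symm h))]
    by_cases hev : Even m
    · rw [if_pos hev] at hlup; omega
    · rw [if_neg hev] at hlup; omega

end Dihedral

/- ### Part 6: the main theorem -/

theorem simple_commute_word (l : List V) (t : V) (h : ∀ i ∈ l, Γ.Adj i t) :
    s t * π l = π l * s t := by
  induction l with
  | nil => simp
  | cons i l' ih =>
    rw [ccs.wordProd_cons, ← mul_assoc, ← simple_comm_of_adj ccs (h i (List.mem_cons_self)),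
      mul_assoc, ih (fun i' hi' => h i' (List.mem_cons_of_mem _ hi')), ← mul_assoc]

theorem commute_word_link (l : List V) (ω : List V) (h : ∀ c ∈ ω, ∀ i ∈ l, Γ.Adj i c) :
    π ω * π l = π l * π ω := by
  induction ω with
  | nil => simp
  | cons c ω' ih =>
    rw [ccs.wordProd_cons, mul_assoc, ih (fun c' hc' => h c' (List.mem_cons_of_mem _ hc')),
      ← mul_assoc, simple_commute_word ccs l c (h c (List.mem_cons_self)), mul_assoc]

theorem commute_par_link (l : List V) {w : W}
    (hw : w ∈ par ccs {t : V | ∀ i ∈ l, Γ.Adj i t}) : w * π l = π l * w := by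
  obtain ⟨ω, hω, rfl⟩ := (mem_par_iff ccs _ w).mp hw
  exact commute_word_link ccs l ω hω

theorem adj_of_commute_simple (j : V) :
    ∀ l : List V, ccs.IsReduced l → s j * π l = π l * s j →
      ¬ ccs.IsLeftDescent (π l) j → ∀ i ∈ l, Γ.Adj i j := by
  intro l
  induction l with
  | nil => intro _ _ _ i hi; exact absurd hi List.not_mem_nil
  | cons i l' ih =>
    intro hred hcomm hnd
    have hred' : ccs.IsReduced l' := by
      have := CoxeterSystem.IsReduced.drop hred (j := 1)
      simpa using this
    have hlen : ℓ (π (i :: l')) = l'.length + 1 := by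
      rw [hred]; simp
    have hlen' : ℓ (π l') = l'.length := hred'
    have hcan : s i * π (i :: l') = π l' := by
      rw [ccs.wordProd_cons, ccs.simple_mul_simple_cancel_left]
    have hne : i ≠ j := by
      rintro rfl
      apply hnd
      unfold CoxeterSystem.IsLeftDescent
      rw [hcan]
      omega
    have hx : ℓ (s j * π (i :: l')) = ℓ (π (i :: l')) + 1 := by
      rcases ccs.length_simple_mul (π (i :: l')) j with hc | hc
      · exact hc
      · exact absurd (by unfold CoxeterSystem.IsLeftDescent; omega) hnd
    have dj : ccs.IsLeftDescent (s j * π (i :: l')) j := by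
      unfold CoxeterSystem.IsLeftDescent
      rw [ccs.simple_mul_simple_cancel_left]
      omega
    have di : ccs.IsLeftDescent (s j * π (i :: l')) i := by
      unfold CoxeterSystem.IsLeftDescent
      have e1 : s i * (s j * π (i :: l')) = π l' * s j := by
        rw [hcomm, ← mul_assoc, hcan]
      rw [e1]
      have e2 : ℓ (π l' * s j) ≤ ℓ (π l') + 1 := by
        have := ccs.length_mul_le (π l') (s j)
        rwa [ccs.length_simple] at this
      omega
    have hadj : Γ.Adj i j := by
      by_contra hna
      exact no_two_nonadjacent_descents ccs hne hna di dj
    refine fun i' hi' => ?_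
    rcases List.mem_cons.mp hi' with rfl | hi''
    · exact hadj
    · refine ih hred' ?_ ?_ i' hi''
      · -- s j commutes with π l'
        rw [← hcan, ← mul_assoc, simple_comm_of_adj ccs (Γ.adj_symm hadj), mul_assoc, hcomm,
          ← mul_assoc]
      · intro hdesc
        unfold CoxeterSystem.IsLeftDescent at hdesc
        have e4 : s j * π (i :: l') = s i * (s j * π l') := by
          rw [ccs.wordProd_cons, ← mul_assoc, simple_comm_of_adj ccs (Γ.adj_symm hadj), mul_assoc]
        have e5 : ℓ (s j * π (i :: l')) = ℓ (s i * (s j * π l')) := by rw [e4]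
        rcases ccs.length_simple_mul (s j * π l') i with hc | hc <;> omega

theorem main_general (Γ₁ Γ₂ : Set V) (w u u' : W) (hw : w ∈ par ccs Γ₁)
    (hu₁ : ∀ i ∈ Γ₁, ¬ ccs.IsLeftDescent u i) (hu'₁ : ∀ i ∈ Γ₁, ¬ ccs.IsLeftDescent u' i)
    (hu₂ : ∀ i ∈ Γ₂, ¬ ccs.IsRightDescent u i) (hu'₂ : ∀ i ∈ Γ₂, ¬ ccs.IsRightDescent u' i)
    (l : List V) (hl : π l = u) (hlred : l.length = ℓ u) :
    u⁻¹ * w * u' ∈ par ccs Γ₂ ↔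
      u = u' ∧ w ∈ par ccs (Γ₁ ∩ Γ₂ ∩ {t : V | ∀ i ∈ l, Γ.Adj i t}) := by
  constructor
  · -- forward direction
    intro hv0
    suffices H : ∀ n (w : W), ℓ w = n → w ∈ par ccs Γ₁ → u⁻¹ * w * u' ∈ par ccs Γ₂ →
        u = u' ∧ w ∈ par ccs (Γ₁ ∩ Γ₂ ∩ {t : V | ∀ i ∈ l, Γ.Adj i t}) from
      H (ℓ w) w rfl hw hv0
    clear hw hv0 w
    intro n
    induction n using Nat.strong_induction_on with
    | _ n IH =>
    intro w hn hw hv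
    by_cases hw1 : w = 1
    · -- base case
      subst hw1
      refine ⟨?_, one_mem _⟩
      rw [mul_one] at hv
      by_contra hne
      have hvne : u⁻¹ * u' ≠ 1 := fun hc => hne (by
        have h9 := congrArg (u * ·) hc
        simpa [← mul_assoc] using h9.symm)
      obtain ⟨i, hiΓ₂, hdesc⟩ := exists_rightDescent_par ccs hv hvne
      unfold CoxeterSystem.IsRightDescent at hdesc
      apply hu'₂ i hiΓ₂
      unfold CoxeterSystem.IsRightDescent
      have e1 : ℓ (u * ((u⁻¹ * u') * s i)) = ℓ u + ℓ ((u⁻¹ * u') * s i) :=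
        length_mul_of_no_rightDescent ccs hu₂ _
          (mul_mem hv (Subgroup.subset_closure ⟨i, hiΓ₂, rfl⟩))
      have e2 : ℓ (u * (u⁻¹ * u')) = ℓ u + ℓ (u⁻¹ * u') :=
        length_mul_of_no_rightDescent ccs hu₂ _ hv
      have e3 : u * (u⁻¹ * u') = u' := by group
      have e4 : u * ((u⁻¹ * u') * s i) = u' * s i := by group
      rw [e3] at e2
      rw [e4] at e1
      omega
    · -- inductive step
      obtain ⟨j, hjΓ₁, hjdesc⟩ := exists_leftDescent_par ccs hw hw1
      unfold CoxeterSystem.IsLeftDescent at hjdesc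
      set v := u⁻¹ * w * u' with hvdef
      have huv : u * v = w * u' := by rw [hvdef]; group
      have hljw : ℓ (s j * w) + 1 = ℓ w := by
        rcases ccs.length_simple_mul w j with hc | hc <;> omega
      have hlwu' : ℓ (w * u') = ℓ w + ℓ u' := length_mul_of_no_leftDescent ccs hu'₁ w hw
      have hljww : ℓ ((s j * w) * u') = ℓ (s j * w) + ℓ u' :=
        length_mul_of_no_leftDescent ccs hu'₁ _
          (mul_mem (Subgroup.subset_closure ⟨j, hjΓ₁, rfl⟩) hw)
      have hdescx : ℓ (s j * (u * v)) < ℓ (u * v) := by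
        rw [huv, ← mul_assoc]
        omega
      obtain ⟨μ, hμred, hμsub, hμπ⟩ := exists_reduced_word_par ccs hv
      have hword : π (l ++ μ) = u * v := by rw [ccs.wordProd_append, hl, hμπ]
      have hnnx : nn ccs (π (l ++ μ))⁻¹ (s j) = 1 := by
        rw [hword]
        exact (nn_inv_eq_one_iff ccs (ccs.isReflection_simple j)).mpr hdescx
      obtain ⟨k, hk, hkeq⟩ := exists_eraseIdx_left ccs (l ++ μ) (s j) hnnx
      rw [hword] at hkeq
      rw [List.length_append] at hk
      by_cases hcase : k < l.length
      · exfalso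
        rw [List.eraseIdx_append_of_lt_length hcase, ccs.wordProd_append, hμπ] at hkeq
        have e5 : (s j * u) * v = π (l.eraseIdx k) * v := by rw [mul_assoc]; exact hkeq
        have e6 := mul_right_cancel e5
        apply hu₁ j hjΓ₁
        unfold CoxeterSystem.IsLeftDescent
        have e7 : ℓ (s j * u) ≤ (l.eraseIdx k).length := by
          rw [e6]; exact ccs.length_wordProd_le _
        have := List.length_eraseIdx_add_one hcase
        omega
      · push_neg at hcase
        rw [List.eraseIdx_append_of_length_le hcase, ccs.wordProd_append, hl] at hkeq
        set m := k - l.length with hmdef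
        have ht : u⁻¹ * s j * u = π (μ.eraseIdx m) * v⁻¹ := by
          calc u⁻¹ * s j * u = u⁻¹ * (s j * (u * v)) * v⁻¹ := by group
            _ = u⁻¹ * (u * π (μ.eraseIdx m)) * v⁻¹ := by rw [hkeq]
            _ = π (μ.eraseIdx m) * v⁻¹ := by group
        have htmem : u⁻¹ * s j * u ∈ par ccs Γ₂ := by
          rw [ht]
          refine mul_mem ?_ (inv_mem hv)
          rw [mem_par_iff]
          exact ⟨μ.eraseIdx m, fun i' hi' => hμsub i' ((μ.eraseIdx_sublist m).mem hi'), rfl⟩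
        have hlut : ℓ (u * (u⁻¹ * s j * u)) = ℓ u + ℓ (u⁻¹ * s j * u) :=
          length_mul_of_no_rightDescent ccs hu₂ _ htmem
        have hueq : u * (u⁻¹ * s j * u) = s j * u := by group
        have hsju : ℓ (s j * u) = ℓ u + 1 := by
          rcases ccs.length_simple_mul u j with hc | hc
          · exact hc
          · exact absurd (by unfold CoxeterSystem.IsLeftDescent; omega) (hu₁ j hjΓ₁)
        have hlt1 : ℓ (u⁻¹ * s j * u) = 1 := by
          rw [hueq, hsju] at hlut
          omega
        obtain ⟨k', hk'eq⟩ := ccs.length_eq_one_iff.mp hlt1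
        have hk'j : k' = j := by
          by_contra hkj
          have hpar : parityHom ccs j (u⁻¹ * s j * u) = parityHom ccs j (s j) := by
            rw [map_mul, map_mul, map_inv, mul_comm, ← mul_assoc, mul_inv_cancel, one_mul]
          rw [hk'eq, parityHom_simple, parityHom_simple, if_pos rfl, if_neg hkj] at hpar
          have : (0 : ZMod 2) = 1 := by
            have := congrArg Multiplicative.toAdd hpar
            simpa using this
          exact zmod2_one_ne_zero this.symm
        rw [hk'j] at hk'eq
        have hteq : u⁻¹ * s j * u = s j := hk'eq
        have hjΓ₂ : j ∈ Γ₂ := mem_of_simple_mem_par ccs (by rw [← hteq]; exact htmem)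
        have hsju_comm : s j * u = u * s j := by
          calc s j * u = u * (u⁻¹ * s j * u) := by group
            _ = u * s j := by rw [hteq]
        have hredl : ccs.IsReduced l := by
          unfold CoxeterSystem.IsReduced
          rw [hl]
          exact hlred.symm
        have hlink : ∀ i' ∈ l, Γ.Adj i' j :=
          adj_of_commute_simple ccs j l hredl (by rw [hl]; exact hsju_comm)
            (by rw [hl]; exact hu₁ j hjΓ₁)
        have hv2 : u⁻¹ * (s j * w) * u' ∈ par ccs Γ₂ := by
          have husj : u⁻¹ * s j = s j * u⁻¹ := by
            calc u⁻¹ * s j = (u⁻¹ * s j * u) * u⁻¹ := by group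
              _ = s j * u⁻¹ := by rw [hteq]
          have e8 : u⁻¹ * (s j * w) * u' = s j * (u⁻¹ * w * u') := by
            calc u⁻¹ * (s j * w) * u' = (u⁻¹ * s j) * w * u' := by group
              _ = (s j * u⁻¹) * w * u' := by rw [husj]
              _ = s j * (u⁻¹ * w * u') := by group
          rw [e8]
          exact mul_mem (Subgroup.subset_closure ⟨j, hjΓ₂, rfl⟩) hv
        obtain ⟨huu', hwmem⟩ := IH (ℓ (s j * w)) (by omega) (s j * w) rfl
          (mul_mem (Subgroup.subset_closure ⟨j, hjΓ₁, rfl⟩) hw) hv2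
        refine ⟨huu', ?_⟩
        have e9 : w = s j * (s j * w) := (ccs.simple_mul_simple_cancel_left (w := w) j).symm
        rw [e9]
        exact mul_mem
          (Subgroup.subset_closure ⟨j, ⟨⟨hjΓ₁, hjΓ₂⟩, fun i' hi' => hlink i' hi'⟩, rfl⟩) hwmem


  · -- backward direction
    rintro ⟨rfl, hw2⟩
    have hcomm : w * u = u * w := by
      rw [← hl]
      exact commute_par_link ccs l (par_mono ccs Set.inter_subset_right hw2)
    have heq : u⁻¹ * w * u = w := by
      rw [mul_assoc, hcomm, ← mul_assoc, inv_mul_cancel, one_mul]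
    rw [heq]
    exact par_mono ccs (fun t ht => ht.1.2) hw2

end RAC

/-- **Combinatorial lemma on right-angled Coxeter groups** (Lemma 2.5 of the paper).
Let `Γ` be a simple graph on `V` with right-angled Coxeter system `cs`, and let
`Γ₁, Γ₂ ⊆ V`.  Let `w ∈ W_{Γ₁}`, and let `u, u'` be elements that do not start with a
letter from `Γ₁` (no element of `Γ₁` is a left descent) and do not end with a letter
from `Γ₂` (no element of `Γ₂` is a right descent).  Let `l` be a reduced word for `u`.
Then `u⁻¹ * w * u' ∈ W_{Γ₂}` if and only if `u = u'` and
`w ∈ W_{Γ₁ ∩ Γ₂ ∩ Link(l)}`, where `Link(l)` is the set of vertices adjacent in `Γ`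
to every letter occurring in `l`. -/
theorem rac_conjugate_mem_parabolic_iff {V : Type*} [DecidableEq V]
    (Γ : SimpleGraph V) [DecidableRel Γ.Adj] (Γ₁ Γ₂ : Set V)
    (w u u' : (racMatrix Γ).Group)
    (hw : w ∈ racParabolic Γ Γ₁)
    (hu₁ : ∀ i ∈ Γ₁, ¬ (racMatrix Γ).toCoxeterSystem.IsLeftDescent u i)
    (hu'₁ : ∀ i ∈ Γ₁, ¬ (racMatrix Γ).toCoxeterSystem.IsLeftDescent u' i)
    (hu₂ : ∀ i ∈ Γ₂, ¬ (racMatrix Γ).toCoxeterSystem.IsRightDescent u i)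
    (hu'₂ : ∀ i ∈ Γ₂, ¬ (racMatrix Γ).toCoxeterSystem.IsRightDescent u' i)
    (l : List V)
    (hl : (racMatrix Γ).toCoxeterSystem.wordProd l = u)
    (hlred : l.length = (racMatrix Γ).toCoxeterSystem.length u) :
    u⁻¹ * w * u' ∈ racParabolic Γ Γ₂ ↔
      u = u' ∧ w ∈ racParabolic Γ (Γ₁ ∩ Γ₂ ∩ {t : V | ∀ i ∈ l, Γ.Adj i t}) := by
  have hpar : ∀ Λ : Set V, racParabolic Γ Λ = RAC.par (racMatrix Γ).toCoxeterSystem Λ := by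
    intro Λ
    unfold racParabolic RAC.par
    rw [CoxeterMatrix.toCoxeterSystem_simple]
  rw [hpar, hpar]
  exact RAC.main_general (racMatrix Γ).toCoxeterSystem Γ₁ Γ₂ w u u'
    (by rw [← hpar]; exact hw) hu₁ hu'₁ hu₂ hu'₂ l hl hlred
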